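/- Let r, s ≥ 0 be integers with r + s ≥ 1, and let ε > 0 be real. Then there exist a constant c = c(r,s,ε) ∈ (0,1] and an integer M₀ = M₀(r,s,ε) > 0 such that for every finite set 𝓜 of even cardinality M ≥ M₀ and every involution ψ : 𝓜 → 𝓜 with no fixed points, there is a subset E ⊆ X_ψ with |E| < ε·|X_ψ| such that: for every subset B ⊆ 𝓜 with |B| > c·M, every vector x = (x_1, …, x_M) ∈ X_ψ \ E, and every bijection φ : 𝓜 → 𝓜, there exist elements u, v ∈ B with φ(u) = v such that u occurs at most r times among the components of x and v occurs at most s times among the components of x. -/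

import Mathlib

set_option linter.unusedSectionVars false
set_option maxHeartbeats 2000000

open Finset

/-- The set of ψ-symmetric vectors of length `M`: vectors `x` with
`x (M+1-j) = ψ (x j)` for all `j` (0-indexed: `x j.rev = ψ (x j)`). -/
def Xpsi (α : Type*) [Fintype α] [DecidableEq α] (M : ℕ) (ψ : α → α) :
    Finset (Fin M → α) :=
  Finset.univ.filter fun x => ∀ j : Fin M, x j.rev = ψ (x j)

/-- The number of occurrences of `y` among the components of `x`. -/
def occCount {α : Type*} {M : ℕ} [DecidableEq α] (x : Fin M → α) (y : α) : ℕ :=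
  (Finset.univ.filter fun j => x j = y).card

/-- `mCount x k` is the number of elements occurring exactly `k` times among
the components of `x`. -/
def mCount {α : Type*} {M : ℕ} [Fintype α] [DecidableEq α] (x : Fin M → α) (k : ℕ) : ℕ :=
  (Finset.univ.filter fun y => occCount x y = k).card

/-- The set of fixed points of `ψ`. -/
def fixPts (α : Type*) [Fintype α] [DecidableEq α] (ψ : α → α) : Finset α :=
  Finset.univ.filter fun y => ψ y = y

/-! ### Counting functions with prescribed numbers of coordinates in given sets -/

section Counting
variable {α : Type} [Fintype α] [DecidableEq α]

def cnt {n : ℕ} (P : Finset α) (f : Fin n → α) : ℕ := (univ.filter fun j => f j ∈ P).card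

lemma cnt_cons {n : ℕ} (P : Finset α) (a : α) (g : Fin n → α) :
    cnt P (Fin.cons a g) = (if a ∈ P then 1 else 0) + cnt P g := by
  simp only [cnt, Finset.card_filter, Fin.sum_univ_succ, Fin.cons_zero, Fin.cons_succ]

lemma card_cnt_succ {n : ℕ} (P Q : Finset α) (p' : ℕ → ℕ → Prop) [∀ k l, Decidable (p' k l)] :
    (univ.filter fun f : Fin (n+1) → α => p' (cnt P f) (cnt Q f)).card
    = ∑ a : α, (univ.filter fun g : Fin n → α =>
        p' ((if a ∈ P then 1 else 0) + cnt P g) ((if a ∈ Q then 1 else 0) + cnt Q g)).card := by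
  rw [Finset.card_filter]
  rw [← Fintype.sum_equiv (Fin.consEquiv (fun _ => α))
      (fun pr : α × (Fin n → α) =>
        if p' (cnt P (Fin.cons pr.1 pr.2)) (cnt Q (Fin.cons pr.1 pr.2)) then 1 else 0)
      (fun f => if p' (cnt P f) (cnt Q f) then 1 else 0)
      (fun pr => rfl)]
  rw [Fintype.sum_prod_type]
  refine Finset.sum_congr rfl fun a _ => ?_
  rw [Finset.card_filter]
  refine Finset.sum_congr rfl fun g _ => ?_
  rw [cnt_cons, cnt_cons]

lemma sum_split (P Q : Finset α) (hPQ : Disjoint P Q) (F : α → ℕ) (C1 C2 C3 : ℕ)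
    (h1 : ∀ a ∈ P, F a = C1) (h2 : ∀ a ∈ Q, F a = C2)
    (h3 : ∀ a ∈ univ \ (P ∪ Q), F a = C3) :
    ∑ a : α, F a = P.card * C1 + Q.card * C2 + (univ \ (P ∪ Q)).card * C3 := by
  rw [← Finset.sum_sdiff (Finset.subset_univ (P ∪ Q)), Finset.sum_union hPQ]
  rw [Finset.sum_congr rfl h1, Finset.sum_congr rfl h2, Finset.sum_congr rfl h3]
  simp [mul_comm]
  ring

lemma notmem_of_mem' {P Q : Finset α} (hPQ : Disjoint P Q) (a : α) (ha : a ∈ P) : a ∉ Q :=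
  Finset.disjoint_left.mp hPQ ha

lemma count00 (P Q : Finset α) (hPQ : Disjoint P Q) : ∀ n : ℕ,
    (univ.filter fun f : Fin n → α => cnt P f = 0 ∧ cnt Q f = 0).card
      = (univ \ (P ∪ Q)).card ^ n := by
  intro n
  induction n with
  | zero =>
    rw [pow_zero]
    have : ∀ f : Fin 0 → α, cnt P f = 0 ∧ cnt Q f = 0 := by
      intro f; constructor <;> simp [cnt]
    rw [Finset.filter_true_of_mem (fun f _ => this f)]
    simp
  | succ n ih =>
    have hstep := (card_cnt_succ P Q (fun k l => k = 0 ∧ l = 0)).trans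
      (sum_split P Q hPQ
      (fun a => (univ.filter fun g : Fin n → α =>
        ((if a ∈ P then 1 else 0) + cnt P g = 0 ∧ (if a ∈ Q then 1 else 0) + cnt Q g = 0)).card)
      0 0 ((univ \ (P ∪ Q)).card ^ n)
      (fun a ha => by
        rw [if_pos ha]; rw [Finset.card_eq_zero, Finset.filter_eq_empty_iff]; intro g _; simp)
      (fun a ha => by
        rw [if_pos ha, if_neg (notmem_of_mem' hPQ.symm a ha)]
        rw [Finset.card_eq_zero, Finset.filter_eq_empty_iff]; intro g _; simp)
      (fun a ha => by
        simp only [Finset.mem_sdiff, Finset.mem_union, not_or] at ha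
        rw [if_neg ha.2.1, if_neg ha.2.2]
        simp only [zero_add]
        exact ih))
    rw [hstep]; ring

lemma count10 (P Q : Finset α) (hPQ : Disjoint P Q) : ∀ n : ℕ,
    (univ.filter fun f : Fin n → α => cnt P f = 1 ∧ cnt Q f = 0).card * (univ \ (P ∪ Q)).card
      = n * P.card * (univ \ (P ∪ Q)).card ^ n := by
  intro n
  induction n with
  | zero =>
    have : ∀ f : Fin 0 → α, ¬(cnt P f = 1 ∧ cnt Q f = 0) := by
      intro f h; have : cnt P f = 0 := by simp [cnt]
      omega
    rw [Finset.filter_false_of_mem (fun f _ => this f)]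
    simp
  | succ n ih =>
    have hstep := (card_cnt_succ P Q (fun k l => k = 1 ∧ l = 0)).trans
      (sum_split P Q hPQ
      (fun a => (univ.filter fun g : Fin n → α =>
        ((if a ∈ P then 1 else 0) + cnt P g = 1 ∧ (if a ∈ Q then 1 else 0) + cnt Q g = 0)).card)
        ((univ.filter fun g : Fin n → α => cnt P g = 0 ∧ cnt Q g = 0).card) 0
        ((univ.filter fun g : Fin n → α => cnt P g = 1 ∧ cnt Q g = 0).card)
      (fun a ha => by
        rw [if_pos ha, if_neg (notmem_of_mem' hPQ a ha)]
        congr 1; ext g; simp)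
      (fun a ha => by
        rw [if_pos ha, if_neg (notmem_of_mem' hPQ.symm a ha)]
        rw [Finset.card_eq_zero, Finset.filter_eq_empty_iff]; intro g _; simp)
      (fun a ha => by
        simp only [Finset.mem_sdiff, Finset.mem_union, not_or] at ha
        rw [if_neg ha.2.1, if_neg ha.2.2]
        simp only [zero_add]))
    rw [hstep, count00 P Q hPQ n]
    calc (P.card * (univ \ (P ∪ Q)).card ^ n + Q.card * 0 +
            (univ \ (P ∪ Q)).card *
              (univ.filter fun g : Fin n → α => cnt P g = 1 ∧ cnt Q g = 0).card)
          * (univ \ (P ∪ Q)).card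
        = P.card * (univ \ (P ∪ Q)).card ^ (n+1)
          + (univ \ (P ∪ Q)).card *
            ((univ.filter fun g : Fin n → α => cnt P g = 1 ∧ cnt Q g = 0).card
              * (univ \ (P ∪ Q)).card) := by ring
      _ = _ := by rw [ih]; ring

lemma count01 (P Q : Finset α) (hPQ : Disjoint P Q) (n : ℕ) :
    (univ.filter fun f : Fin n → α => cnt P f = 0 ∧ cnt Q f = 1).card * (univ \ (P ∪ Q)).card
      = n * Q.card * (univ \ (P ∪ Q)).card ^ n := by
  have := count10 Q P hPQ.symm n
  rw [Finset.union_comm Q P] at this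
  rw [← this]
  congr 2
  ext f
  simp [and_comm]

lemma count11 (P Q : Finset α) (hPQ : Disjoint P Q) : ∀ n : ℕ,
    (univ.filter fun f : Fin n → α => cnt P f = 1 ∧ cnt Q f = 1).card
        * (univ \ (P ∪ Q)).card * (univ \ (P ∪ Q)).card
      = n * (n-1) * P.card * Q.card * (univ \ (P ∪ Q)).card ^ n := by
  intro n
  induction n with
  | zero =>
    have : ∀ f : Fin 0 → α, ¬(cnt P f = 1 ∧ cnt Q f = 1) := by
      intro f h; have : cnt P f = 0 := by simp [cnt]
      omega
    rw [Finset.filter_false_of_mem (fun f _ => this f)]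
    simp
  | succ n ih =>
    have hstep := (card_cnt_succ P Q (fun k l => k = 1 ∧ l = 1)).trans
      (sum_split P Q hPQ
      (fun a => (univ.filter fun g : Fin n → α =>
        ((if a ∈ P then 1 else 0) + cnt P g = 1 ∧ (if a ∈ Q then 1 else 0) + cnt Q g = 1)).card)
        ((univ.filter fun g : Fin n → α => cnt P g = 0 ∧ cnt Q g = 1).card)
        ((univ.filter fun g : Fin n → α => cnt P g = 1 ∧ cnt Q g = 0).card)
        ((univ.filter fun g : Fin n → α => cnt P g = 1 ∧ cnt Q g = 1).card)
      (fun a ha => by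
        rw [if_pos ha, if_neg (notmem_of_mem' hPQ a ha)]
        congr 1; ext g; simp)
      (fun a ha => by
        rw [if_pos ha, if_neg (notmem_of_mem' hPQ.symm a ha)]
        congr 1; ext g; simp [and_comm]
        )
      (fun a ha => by
        simp only [Finset.mem_sdiff, Finset.mem_union, not_or] at ha
        rw [if_neg ha.2.1, if_neg ha.2.2]
        simp only [zero_add]))
    rw [hstep]
    set R := (univ \ (P ∪ Q)).card
    set c01 := (univ.filter fun g : Fin n → α => cnt P g = 0 ∧ cnt Q g = 1).card
    set c10 := (univ.filter fun g : Fin n → α => cnt P g = 1 ∧ cnt Q g = 0).card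
    set c11 := (univ.filter fun g : Fin n → α => cnt P g = 1 ∧ cnt Q g = 1).card
    have e01 : c01 * R = n * Q.card * R ^ n := count01 P Q hPQ n
    have e10 : c10 * R = n * P.card * R ^ n := count10 P Q hPQ n
    calc (P.card * c01 + Q.card * c10 + R * c11) * R * R
        = P.card * (c01 * R) * R + Q.card * (c10 * R) * R + R * (c11 * R * R) := by ring
      _ = P.card * (n * Q.card * R ^ n) * R + Q.card * (n * P.card * R ^ n) * R
            + R * (n * (n-1) * P.card * Q.card * R ^ n) := by rw [e01, e10, ih]
      _ = (2 * n + n * (n - 1)) * P.card * Q.card * R ^ (n+1) := by ring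
      _ = (n+1) * ((n+1)-1) * P.card * Q.card * R ^ (n+1) := by
          congr 1
          have : 2 * n + n * (n-1) = (n+1) * n := by cases n <;> simp <;> ring
          rw [this]; simp

end Counting

/-! ### Parametrization of `Xpsi` by the first half of the coordinates -/

section Param
variable {α : Type} [Fintype α] [DecidableEq α] (ψ : α → α) {n : ℕ}

def extF (f : Fin n → α) : Fin (n+n) → α := fun j =>
  if h : (j : ℕ) < n then f ⟨j, h⟩
  else ψ (f ⟨n + n - 1 - (j : ℕ), by have := j.isLt; omega⟩)

def resF (x : Fin (n+n) → α) : Fin n → α := fun i => x ⟨i, by have := i.isLt; omega⟩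

lemma extF_mem (hinv : ∀ y, ψ (ψ y) = y) (f : Fin n → α) : extF ψ f ∈ Xpsi α (n+n) ψ := by
  simp only [Xpsi, mem_filter, mem_univ, true_and]
  intro j
  have hj := j.isLt
  have hrev : (j.rev : ℕ) = n + n - ((j : ℕ) + 1) := Fin.val_rev j
  by_cases h : (j : ℕ) < n
  · have h1 : ¬ ((j.rev : ℕ) < n) := by omega
    simp only [extF]
    rw [dif_neg h1, dif_pos h]
    exact congrArg ψ (congrArg f (Fin.ext (by simp only [Fin.val_mk, Fin.val_rev]; omega)))
  · have h1 : (j.rev : ℕ) < n := by omega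
    simp only [extF]
    rw [dif_pos h1, dif_neg h, hinv]
    exact congrArg f (Fin.ext (by simp only [Fin.val_mk, Fin.val_rev]; omega))

lemma res_ext (f : Fin n → α) : resF (extF ψ f) = f := by
  funext i
  have hi := i.isLt
  simp only [resF, extF]
  rw [dif_pos hi]

lemma ext_res (hinv : ∀ y, ψ (ψ y) = y) {x : Fin (n+n) → α} (hx : x ∈ Xpsi α (n+n) ψ) :
    extF ψ (resF x) = x := by
  simp only [Xpsi, mem_filter, mem_univ, true_and] at hx
  funext j
  have hj := j.isLt
  by_cases h : (j : ℕ) < n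
  · simp only [extF, resF]
    rw [dif_pos h]
  · simp only [extF, resF]
    rw [dif_neg h]
    have h2 : (⟨n + n - 1 - (j : ℕ), by omega⟩ : Fin (n+n)) = j.rev := by
      refine Fin.ext ?_
      simp only [Fin.val_mk, Fin.val_rev]; omega
    have h3 := hx j
    calc ψ (x ⟨n + n - 1 - (j : ℕ), by omega⟩) = ψ (x j.rev) := by rw [h2]
      _ = ψ (ψ (x j)) := by rw [h3]
      _ = x j := hinv _

lemma sum_Xpsi (hinv : ∀ y, ψ (ψ y) = y) {γ : Type} [AddCommMonoid γ]
    (F : (Fin (n+n) → α) → γ) :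
    ∑ x ∈ Xpsi α (n+n) ψ, F x = ∑ f : Fin n → α, F (extF ψ f) := by
  refine Finset.sum_nbij' (fun x => resF x) (fun f => extF ψ f) ?_ ?_ ?_ ?_ ?_
  · intro a _; exact mem_univ _
  · intro f _; exact extF_mem ψ hinv f
  · intro x hx; exact ext_res ψ hinv hx
  · intro f _; exact res_ext ψ f
  · intro x hx; rw [ext_res ψ hinv hx]

lemma card_Xpsi (hinv : ∀ y, ψ (ψ y) = y) :
    (Xpsi α (n+n) ψ).card = (Fintype.card α) ^ n := by
  rw [Finset.card_eq_sum_ones, sum_Xpsi ψ hinv (fun _ => 1), ← Finset.card_eq_sum_ones]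
  simp

lemma occ_ext (hinv : ∀ y, ψ (ψ y) = y) (hnf : ∀ y, ψ y ≠ y) (f : Fin n → α) (y : α) :
    occCount (extF ψ f) y = cnt ({y, ψ y} : Finset α) f := by
  rw [occCount, cnt, Finset.card_filter, Finset.card_filter]
  rw [Fin.sum_univ_add]
  have e1 : ∀ i : Fin n, extF ψ f (Fin.castAdd n i) = f i := by
    intro i
    simp only [extF, Fin.coe_castAdd]
    rw [dif_pos i.isLt]
  have e2 : ∀ i : Fin n, extF ψ f (Fin.natAdd n i) = ψ (f i.rev) := by
    intro i
    have hi := i.isLt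
    simp only [extF, Fin.coe_natAdd]
    rw [dif_neg (by omega)]
    refine congrArg ψ (congrArg f (Fin.ext ?_))
    simp only [Fin.val_mk, Fin.val_rev]; omega
  calc (∑ i : Fin n, if extF ψ f (Fin.castAdd n i) = y then 1 else 0)
        + (∑ i : Fin n, if extF ψ f (Fin.natAdd n i) = y then 1 else 0)
      = (∑ i : Fin n, if f i = y then 1 else 0)
        + (∑ i : Fin n, if f i.rev = ψ y then 1 else 0) := by
        congr 1
        · exact Finset.sum_congr rfl fun i _ => by rw [e1]
        · refine Finset.sum_congr rfl fun i _ => ?_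
          rw [e2]
          congr 1
          simp only [eq_iff_iff]
          constructor
          · intro h; rw [← h, hinv]
          · intro h; rw [h, hinv]
      _ = (∑ i : Fin n, if f i = y then 1 else 0)
        + (∑ i : Fin n, if f i = ψ y then 1 else 0) := by
        congr 1
        exact Fintype.sum_equiv (Fin.revPerm) _ _ (fun i => rfl)
      _ = ∑ i : Fin n, if f i ∈ ({y, ψ y} : Finset α) then 1 else 0 := by
        rw [← Finset.sum_add_distrib]
        refine Finset.sum_congr rfl fun i _ => ?_
        by_cases h1 : f i = y
        · rw [if_pos h1, if_neg (by rw [h1]; exact fun hc => hnf y hc.symm),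
            if_pos (by simp [h1])]
        · by_cases h2 : f i = ψ y
          · rw [if_neg h1, if_pos h2, if_pos (by simp [h2])]
          · rw [if_neg h1, if_neg h2, if_neg (by simp [h1, h2])]

end Param
section Moments
variable {α : Type} [Fintype α] [DecidableEq α] (ψ : α → α)

def gw {n : ℕ} (y : α) (f : Fin n → α) : ℝ :=
  (if cnt ({y, ψ y} : Finset α) f = 0 then 2 else 0)
  + (if cnt ({y, ψ y} : Finset α) f = 1 then 1 else 0)

lemma pair_card (hnf : ∀ y, ψ y ≠ y) (y : α) : ({y, ψ y} : Finset α).card = 2 :=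
  Finset.card_pair (Ne.symm (hnf y))

lemma card_diff (S : Finset α) : ((univ \ S).card : ℝ) = (Fintype.card α : ℝ) - S.card := by
  rw [Finset.card_sdiff_of_subset (Finset.subset_univ S), Finset.card_univ,
    Nat.cast_sub (Finset.card_le_univ S)]

lemma countP0 {n : ℕ} (P : Finset α) :
    (univ.filter fun f : Fin n → α => cnt P f = 0).card = (univ \ P).card ^ n := by
  have h := count00 P ∅ (Finset.disjoint_empty_right P) n
  rw [Finset.union_empty] at h
  rw [← h]
  congr 1
  ext f
  simp [cnt]

lemma countP1 {n : ℕ} (P : Finset α) :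
    (univ.filter fun f : Fin n → α => cnt P f = 1).card * (univ \ P).card
      = n * P.card * (univ \ P).card ^ n := by
  have h := count10 P ∅ (Finset.disjoint_empty_right P) n
  rw [Finset.union_empty] at h
  rw [← h]
  congr 2
  ext f
  simp [cnt]
  exact Finset.mem_filter.trans (by simp)

lemma sum_ite_card {n : ℕ} (p : (Fin n → α) → Prop) [DecidablePred p] (c : ℝ) :
    (∑ f : Fin n → α, if p f then c else 0) = ((univ.filter p).card : ℝ) * c := by
  rw [← Finset.sum_filter, Finset.sum_const, nsmul_eq_mul]

-- `Σ_f gw y f`, multiplied by (m-2)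
lemma sum_gw {n : ℕ} (hnf : ∀ y, ψ y ≠ y) (y : α) :
    (∑ f : Fin n → α, gw ψ y f) * ((Fintype.card α : ℝ) - 2)
      = (2 * ((Fintype.card α : ℝ) - 2) + 2 * n) * ((Fintype.card α : ℝ) - 2) ^ n := by
  set P : Finset α := {y, ψ y} with hP
  have hA : ((univ \ P).card : ℝ) = (Fintype.card α : ℝ) - 2 := by
    rw [card_diff, pair_card ψ hnf y]; norm_num
  have hsum : (∑ f : Fin n → α, gw ψ y f)
      = ((univ.filter fun f : Fin n → α => cnt P f = 0).card : ℝ) * 2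
        + ((univ.filter fun f : Fin n → α => cnt P f = 1).card : ℝ) * 1 := by
    simp only [gw, Finset.sum_add_distrib]
    rw [sum_ite_card, sum_ite_card]
  have h0 : ((univ.filter fun f : Fin n → α => cnt P f = 0).card : ℝ)
      = ((Fintype.card α : ℝ) - 2) ^ n := by
    rw [countP0]; push_cast; rw [hA]
  have h1 : ((univ.filter fun f : Fin n → α => cnt P f = 1).card : ℝ)
        * ((Fintype.card α : ℝ) - 2)
      = 2 * n * ((Fintype.card α : ℝ) - 2) ^ n := by
    have hn1 : (univ.filter fun f : Fin n → α => cnt P f = 1).card * (univ \ P).card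
        = 2 * n * (univ \ P).card ^ n := by
      rw [countP1, pair_card ψ hnf y]; ring
    rw [← hA]
    exact_mod_cast hn1
  rw [hsum]
  calc (((univ.filter fun f : Fin n → α => cnt P f = 0).card : ℝ) * 2
        + ((univ.filter fun f : Fin n → α => cnt P f = 1).card : ℝ) * 1)
        * ((Fintype.card α : ℝ) - 2)
      = 2 * (((univ.filter fun f : Fin n → α => cnt P f = 0).card : ℝ)
          * ((Fintype.card α : ℝ) - 2))
        + (((univ.filter fun f : Fin n → α => cnt P f = 1).card : ℝ)
          * ((Fintype.card α : ℝ) - 2)) := by ring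
    _ = _ := by rw [h0, h1]; ring

end Moments

section M2
variable {α : Type} [Fintype α] [DecidableEq α] (ψ : α → α)

lemma gw_sq (y : α) {n : ℕ} (f : Fin n → α) :
    gw ψ y f * gw ψ y f
      = (if cnt ({y, ψ y} : Finset α) f = 0 then 4 else 0)
        + (if cnt ({y, ψ y} : Finset α) f = 1 then 1 else 0) := by
  simp only [gw]
  split_ifs <;> first | (exfalso; omega) | norm_num

lemma sum_gw_sq {n : ℕ} (hnf : ∀ y, ψ y ≠ y) (y : α) :
    (∑ f : Fin n → α, gw ψ y f * gw ψ y f) * ((Fintype.card α : ℝ) - 2)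
      = (4 * ((Fintype.card α : ℝ) - 2) + 2 * n) * ((Fintype.card α : ℝ) - 2) ^ n := by
  set P : Finset α := {y, ψ y} with hP
  have hA : ((univ \ P).card : ℝ) = (Fintype.card α : ℝ) - 2 := by
    rw [card_diff, pair_card ψ hnf y]; norm_num
  have hsum : (∑ f : Fin n → α, gw ψ y f * gw ψ y f)
      = ((univ.filter fun f : Fin n → α => cnt P f = 0).card : ℝ) * 4
        + ((univ.filter fun f : Fin n → α => cnt P f = 1).card : ℝ) * 1 := by
    rw [Finset.sum_congr rfl (fun f _ => gw_sq ψ y f), Finset.sum_add_distrib,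
      sum_ite_card, sum_ite_card]
  have h0 : ((univ.filter fun f : Fin n → α => cnt P f = 0).card : ℝ)
      = ((Fintype.card α : ℝ) - 2) ^ n := by
    rw [countP0]; push_cast; rw [hA]
  have hn1 : (univ.filter fun f : Fin n → α => cnt P f = 1).card * (univ \ P).card
      = 2 * n * (univ \ P).card ^ n := by
    rw [countP1, pair_card ψ hnf y]; ring
  have h1 : ((univ.filter fun f : Fin n → α => cnt P f = 1).card : ℝ)
        * ((Fintype.card α : ℝ) - 2)
      = 2 * n * ((Fintype.card α : ℝ) - 2) ^ n := by
    rw [← hA]; exact_mod_cast hn1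
  rw [hsum]
  calc (((univ.filter fun f : Fin n → α => cnt P f = 0).card : ℝ) * 4
        + ((univ.filter fun f : Fin n → α => cnt P f = 1).card : ℝ) * 1)
        * ((Fintype.card α : ℝ) - 2)
      = 4 * (((univ.filter fun f : Fin n → α => cnt P f = 0).card : ℝ)
          * ((Fintype.card α : ℝ) - 2))
        + (((univ.filter fun f : Fin n → α => cnt P f = 1).card : ℝ)
          * ((Fintype.card α : ℝ) - 2)) := by ring
    _ = _ := by rw [h0, h1]; ring

lemma gw_mul (y y' : α) {n : ℕ} (f : Fin n → α) :
    gw ψ y f * gw ψ y' f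
      = (if cnt ({y, ψ y} : Finset α) f = 0 ∧ cnt ({y', ψ y'} : Finset α) f = 0 then 4 else 0)
      + (if cnt ({y, ψ y} : Finset α) f = 0 ∧ cnt ({y', ψ y'} : Finset α) f = 1 then 2 else 0)
      + (if cnt ({y, ψ y} : Finset α) f = 1 ∧ cnt ({y', ψ y'} : Finset α) f = 0 then 2 else 0)
      + (if cnt ({y, ψ y} : Finset α) f = 1 ∧ cnt ({y', ψ y'} : Finset α) f = 1 then 1 else 0) := by
  simp only [gw]
  split_ifs <;> first | (exfalso; omega) | norm_num

lemma sum_gw_mul {n : ℕ} (hn1 : 1 ≤ n) (y y' : α)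
    (hd : Disjoint ({y, ψ y} : Finset α) ({y', ψ y'} : Finset α))
    (hcy : ({y, ψ y} : Finset α).card = 2) (hcy' : ({y', ψ y'} : Finset α).card = 2) :
    (∑ f : Fin n → α, gw ψ y f * gw ψ y' f)
        * (((Fintype.card α : ℝ) - 4) * ((Fintype.card α : ℝ) - 4))
      = (4 * ((Fintype.card α : ℝ) - 4) * ((Fintype.card α : ℝ) - 4)
          + 8 * n * ((Fintype.card α : ℝ) - 4) + 4 * n * ((n : ℝ) - 1))
        * ((Fintype.card α : ℝ) - 4) ^ n := by
  set P : Finset α := {y, ψ y} with hP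
  set Q : Finset α := {y', ψ y'} with hQ
  have hPQ4 : (P ∪ Q).card = 4 := by
    rw [Finset.card_union_of_disjoint hd, hcy, hcy']
  have hB : ((univ \ (P ∪ Q)).card : ℝ) = (Fintype.card α : ℝ) - 4 := by
    rw [card_diff, hPQ4]; norm_num
  set R : ℕ := (univ \ (P ∪ Q)).card with hR
  have hsum : (∑ f : Fin n → α, gw ψ y f * gw ψ y' f)
      = ((univ.filter fun f : Fin n → α => cnt P f = 0 ∧ cnt Q f = 0).card : ℝ) * 4
        + ((univ.filter fun f : Fin n → α => cnt P f = 0 ∧ cnt Q f = 1).card : ℝ) * 2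
        + ((univ.filter fun f : Fin n → α => cnt P f = 1 ∧ cnt Q f = 0).card : ℝ) * 2
        + ((univ.filter fun f : Fin n → α => cnt P f = 1 ∧ cnt Q f = 1).card : ℝ) * 1 := by
    rw [Finset.sum_congr rfl (fun f _ => gw_mul ψ y y' f)]
    rw [Finset.sum_add_distrib, Finset.sum_add_distrib, Finset.sum_add_distrib,
      sum_ite_card, sum_ite_card, sum_ite_card, sum_ite_card]
  have h00 : ((univ.filter fun f : Fin n → α => cnt P f = 0 ∧ cnt Q f = 0).card : ℝ)
      = ((Fintype.card α : ℝ) - 4) ^ n := by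
    rw [count00 P Q hd n]; push_cast; rw [hB]
  have h01 : ((univ.filter fun f : Fin n → α => cnt P f = 0 ∧ cnt Q f = 1).card : ℝ)
        * ((Fintype.card α : ℝ) - 4)
      = 2 * n * ((Fintype.card α : ℝ) - 4) ^ n := by
    rw [← hB]
    exact_mod_cast (by rw [count01 P Q hd n, hcy'] ; ring :
      ((univ.filter fun f : Fin n → α => cnt P f = 0 ∧ cnt Q f = 1).card * R
        = 2 * n * R ^ n))
  have h10 : ((univ.filter fun f : Fin n → α => cnt P f = 1 ∧ cnt Q f = 0).card : ℝ)
        * ((Fintype.card α : ℝ) - 4)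
      = 2 * n * ((Fintype.card α : ℝ) - 4) ^ n := by
    rw [← hB]
    exact_mod_cast (by rw [count10 P Q hd n, hcy] ; ring :
      ((univ.filter fun f : Fin n → α => cnt P f = 1 ∧ cnt Q f = 0).card * R
        = 2 * n * R ^ n))
  have h11 : ((univ.filter fun f : Fin n → α => cnt P f = 1 ∧ cnt Q f = 1).card : ℝ)
        * (((Fintype.card α : ℝ) - 4) * ((Fintype.card α : ℝ) - 4))
      = 4 * n * ((n:ℝ) - 1) * ((Fintype.card α : ℝ) - 4) ^ n := by
    have hnat : (univ.filter fun f : Fin n → α => cnt P f = 1 ∧ cnt Q f = 1).card * R * R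
        = 4 * (n * (n-1)) * R ^ n := by
      rw [count11 P Q hd n, hcy, hcy']; ring
    have : ((univ.filter fun f : Fin n → α => cnt P f = 1 ∧ cnt Q f = 1).card : ℝ) * R * R
        = 4 * ((n : ℝ) * ((n:ℝ)-1)) * (R:ℝ) ^ n := by
      have := congrArg (Nat.cast : ℕ → ℝ) hnat
      push_cast [Nat.cast_sub hn1] at this
      convert this using 2 <;> push_cast <;> ring
    rw [← hB]
    calc _ = ((univ.filter fun f : Fin n → α => cnt P f = 1 ∧ cnt Q f = 1).card : ℝ)
            * (R:ℝ) * (R:ℝ) := by ring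
      _ = 4 * ((n : ℝ) * ((n:ℝ)-1)) * (R:ℝ) ^ n := this
      _ = _ := by ring
  rw [hsum]
  calc (((univ.filter fun f : Fin n → α => cnt P f = 0 ∧ cnt Q f = 0).card : ℝ) * 4
        + ((univ.filter fun f : Fin n → α => cnt P f = 0 ∧ cnt Q f = 1).card : ℝ) * 2
        + ((univ.filter fun f : Fin n → α => cnt P f = 1 ∧ cnt Q f = 0).card : ℝ) * 2
        + ((univ.filter fun f : Fin n → α => cnt P f = 1 ∧ cnt Q f = 1).card : ℝ) * 1)
        * (((Fintype.card α : ℝ) - 4) * ((Fintype.card α : ℝ) - 4))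
      = 4 * (((univ.filter fun f : Fin n → α => cnt P f = 0 ∧ cnt Q f = 0).card : ℝ))
          * (((Fintype.card α : ℝ) - 4) * ((Fintype.card α : ℝ) - 4))
        + 2 * (((univ.filter fun f : Fin n → α => cnt P f = 0 ∧ cnt Q f = 1).card : ℝ)
            * ((Fintype.card α : ℝ) - 4)) * ((Fintype.card α : ℝ) - 4)
        + 2 * (((univ.filter fun f : Fin n → α => cnt P f = 1 ∧ cnt Q f = 0).card : ℝ)
            * ((Fintype.card α : ℝ) - 4)) * ((Fintype.card α : ℝ) - 4)
        + ((univ.filter fun f : Fin n → α => cnt P f = 1 ∧ cnt Q f = 1).card : ℝ)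
            * (((Fintype.card α : ℝ) - 4) * ((Fintype.card α : ℝ) - 4)) := by ring
    _ = _ := by rw [h00, h01, h10, h11]; ring

end M2

section Assemble
variable {α : Type} [Fintype α] [DecidableEq α] (ψ : α → α)

lemma moment1 {n : ℕ} (hnf : ∀ y, ψ y ≠ y) :
    (∑ f : Fin n → α, ∑ y : α, gw ψ y f) * ((Fintype.card α : ℝ) - 2)
      = (Fintype.card α : ℝ) * (2 * ((Fintype.card α : ℝ) - 2) + 2 * n)
          * ((Fintype.card α : ℝ) - 2) ^ n := by
  rw [Finset.sum_comm, Finset.sum_mul]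
  rw [Finset.sum_congr rfl (fun y _ => sum_gw ψ hnf y)]
  rw [Finset.sum_const, Finset.card_univ, nsmul_eq_mul]
  ring

lemma pair_eq (hinv : ∀ y, ψ (ψ y) = y) (y y' : α) (hy' : y' ∈ ({y, ψ y} : Finset α)) :
    ({y', ψ y'} : Finset α) = ({y, ψ y} : Finset α) := by
  simp only [Finset.mem_insert, Finset.mem_singleton] at hy'
  rcases hy' with h | h
  · rw [h]
  · rw [h, hinv, Finset.pair_comm]

lemma pair_disj (hinv : ∀ y, ψ (ψ y) = y) (y y' : α)
    (hy' : y' ∈ univ \ ({y, ψ y} : Finset α)) :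
    Disjoint ({y, ψ y} : Finset α) ({y', ψ y'} : Finset α) := by
  simp only [Finset.mem_sdiff, Finset.mem_insert, Finset.mem_singleton, not_or] at hy'
  obtain ⟨-, h1, h2⟩ := hy'
  rw [Finset.disjoint_left]
  intro a ha ha'
  simp only [Finset.mem_insert, Finset.mem_singleton] at ha ha'
  rcases ha with rfl | rfl <;> rcases ha' with h | h
  · exact h1 h.symm
  · apply h2
    rw [h, hinv]
  · exact h2 h.symm
  · apply h1
    have := congrArg ψ h
    rw [hinv, hinv] at this; exact this.symm

lemma moment2_inner {n : ℕ} (hinv : ∀ y, ψ (ψ y) = y) (hnf : ∀ y, ψ y ≠ y)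
    (hn1 : 1 ≤ n) (y : α) :
    (∑ y' : α, ∑ f : Fin n → α, gw ψ y f * gw ψ y' f)
        * (((Fintype.card α : ℝ) - 2) * (((Fintype.card α : ℝ) - 4) * ((Fintype.card α : ℝ) - 4)))
      = 2 * ((4 * ((Fintype.card α : ℝ) - 2) + 2 * n) * ((Fintype.card α : ℝ) - 2) ^ n)
          * (((Fintype.card α : ℝ) - 4) * ((Fintype.card α : ℝ) - 4))
        + ((Fintype.card α : ℝ) - 2)
          * ((4 * ((Fintype.card α : ℝ) - 4) * ((Fintype.card α : ℝ) - 4)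
              + 8 * n * ((Fintype.card α : ℝ) - 4) + 4 * n * ((n : ℝ) - 1))
            * ((Fintype.card α : ℝ) - 4) ^ n)
          * ((Fintype.card α : ℝ) - 2) := by
  set m : ℝ := (Fintype.card α : ℝ) with hm
  set P : Finset α := {y, ψ y} with hP
  rw [← Finset.sum_sdiff (Finset.subset_univ P), add_mul]
  have hdiag : (∑ y' ∈ P, ∑ f : Fin n → α, gw ψ y f * gw ψ y' f)
      * ((m - 2) * ((m - 4) * (m - 4)))
      = 2 * ((4 * (m - 2) + 2 * n) * (m - 2) ^ n) * ((m - 4) * (m - 4)) := by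
    have hconst : ∀ y' ∈ P, (∑ f : Fin n → α, gw ψ y f * gw ψ y' f)
        = ∑ f : Fin n → α, gw ψ y f * gw ψ y f := by
      intro y' hy'
      refine Finset.sum_congr rfl fun f _ => ?_
      have : gw ψ y' f = gw ψ y f := by
        simp only [gw, pair_eq ψ hinv y y' hy']
      rw [this]
    rw [Finset.sum_congr rfl hconst, Finset.sum_const, pair_card ψ hnf y, nsmul_eq_mul]
    have := sum_gw_sq ψ hnf (n := n) y
    calc (2 : ℕ) * (∑ f : Fin n → α, gw ψ y f * gw ψ y f) * ((m - 2) * ((m - 4) * (m - 4)))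
        = 2 * ((∑ f : Fin n → α, gw ψ y f * gw ψ y f) * (m - 2)) * ((m - 4) * (m - 4)) := by
          push_cast; ring
      _ = _ := by rw [this]
  have hoff : (∑ y' ∈ univ \ P, ∑ f : Fin n → α, gw ψ y f * gw ψ y' f)
      * ((m - 2) * ((m - 4) * (m - 4)))
      = (m - 2) * ((4 * (m - 4) * (m - 4) + 8 * n * (m - 4) + 4 * n * ((n : ℝ) - 1))
          * (m - 4) ^ n) * (m - 2) := by
    have hconst : ∀ y' ∈ univ \ P, (∑ f : Fin n → α, gw ψ y f * gw ψ y' f)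
        * ((m - 4) * (m - 4))
        = (4 * (m - 4) * (m - 4) + 8 * n * (m - 4) + 4 * n * ((n : ℝ) - 1)) * (m - 4) ^ n := by
      intro y' hy'
      exact sum_gw_mul ψ hn1 y y' (pair_disj ψ hinv y y' hy')
        (pair_card ψ hnf y) (pair_card ψ hnf y')
    have hcard : ((univ \ P).card : ℝ) = m - 2 := by
      rw [card_diff, pair_card ψ hnf y]; norm_num [hm]
    calc (∑ y' ∈ univ \ P, ∑ f : Fin n → α, gw ψ y f * gw ψ y' f)
          * ((m - 2) * ((m - 4) * (m - 4)))
        = ((∑ y' ∈ univ \ P, ∑ f : Fin n → α, gw ψ y f * gw ψ y' f)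
            * ((m - 4) * (m - 4))) * (m - 2) := by ring
      _ = (∑ y' ∈ univ \ P, (∑ f : Fin n → α, gw ψ y f * gw ψ y' f)
            * ((m - 4) * (m - 4))) * (m - 2) := by rw [Finset.sum_mul]
      _ = (∑ y' ∈ univ \ P,
            (4 * (m - 4) * (m - 4) + 8 * n * (m - 4) + 4 * n * ((n : ℝ) - 1)) * (m - 4) ^ n)
            * (m - 2) := by rw [Finset.sum_congr rfl hconst]
      _ = ((univ \ P).card : ℝ)
            * ((4 * (m - 4) * (m - 4) + 8 * n * (m - 4) + 4 * n * ((n : ℝ) - 1)) * (m - 4) ^ n)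
            * (m - 2) := by rw [Finset.sum_const, nsmul_eq_mul]
      _ = _ := by rw [hcard]
  rw [hdiag, hoff]
  ring

lemma moment2 {n : ℕ} (hinv : ∀ y, ψ (ψ y) = y) (hnf : ∀ y, ψ y ≠ y) (hn1 : 1 ≤ n) :
    (∑ f : Fin n → α, (∑ y : α, gw ψ y f) ^ 2)
        * (((Fintype.card α : ℝ) - 2) * (((Fintype.card α : ℝ) - 4) * ((Fintype.card α : ℝ) - 4)))
      = (Fintype.card α : ℝ)
        * (2 * ((4 * ((Fintype.card α : ℝ) - 2) + 2 * n) * ((Fintype.card α : ℝ) - 2) ^ n)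
            * (((Fintype.card α : ℝ) - 4) * ((Fintype.card α : ℝ) - 4))
          + ((Fintype.card α : ℝ) - 2)
            * ((4 * ((Fintype.card α : ℝ) - 4) * ((Fintype.card α : ℝ) - 4)
                + 8 * n * ((Fintype.card α : ℝ) - 4) + 4 * n * ((n : ℝ) - 1))
              * ((Fintype.card α : ℝ) - 4) ^ n)
            * ((Fintype.card α : ℝ) - 2)) := by
  set m : ℝ := (Fintype.card α : ℝ) with hm
  have hexp : (∑ f : Fin n → α, (∑ y : α, gw ψ y f) ^ 2)
      = ∑ y : α, ∑ y' : α, ∑ f : Fin n → α, gw ψ y f * gw ψ y' f := by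
    calc ∑ f : Fin n → α, (∑ y : α, gw ψ y f) ^ 2
        = ∑ f : Fin n → α, ∑ y : α, ∑ y' : α, gw ψ y f * gw ψ y' f := by
          refine Finset.sum_congr rfl fun f _ => ?_
          rw [sq, Finset.sum_mul_sum]
      _ = ∑ y : α, ∑ f : Fin n → α, ∑ y' : α, gw ψ y f * gw ψ y' f := Finset.sum_comm
      _ = ∑ y : α, ∑ y' : α, ∑ f : Fin n → α, gw ψ y f * gw ψ y' f :=
          Finset.sum_congr rfl fun y _ => Finset.sum_comm
  rw [hexp, Finset.sum_mul]
  rw [Finset.sum_congr rfl (fun y _ => moment2_inner ψ hinv hnf hn1 y)]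
  rw [Finset.sum_const, Finset.card_univ, nsmul_eq_mul]

end Assemble

section Analytic

lemma mCount_real {α : Type} [Fintype α] [DecidableEq α] {M : ℕ} (x : Fin M → α) (k : ℕ) :
    ((mCount x k : ℕ) : ℝ) = ∑ y : α, if occCount x y = k then (1:ℝ) else 0 := by
  rw [mCount, Finset.card_filter, Nat.cast_sum]
  simp

lemma T_ext {α : Type} [Fintype α] [DecidableEq α] (ψ : α → α)
    (hinv : ∀ y, ψ (ψ y) = y) (hnf : ∀ y, ψ y ≠ y) {n : ℕ} (f : Fin n → α) :
    ((2 * mCount (extF ψ f) 0 + mCount (extF ψ f) 1 : ℕ) : ℝ) = ∑ y : α, gw ψ y f := by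
  push_cast
  rw [mCount_real, mCount_real, Finset.mul_sum, ← Finset.sum_add_distrib]
  refine Finset.sum_congr rfl fun y _ => ?_
  rw [gw, occ_ext ψ hinv hnf f y]
  split_ifs <;> norm_num

lemma polyineq (m : ℝ) (k : ℕ) (hm : 1000 ≤ m) :
    (m * (2 * (4*(m-2) + m) * (m-2)^(k+1)
        + (m-2) * ((4*(m-4)*(m-4) + 4*m*(m-4) + m*(m-2)) * (m-4)^k))) * m^(k+2)
      ≤ (m * (3*m-4) * (m-2)^(k+1))^2 + 10 * m^(2*k+5) := by
  have h2 : (0:ℝ) ≤ m - 2 := by linarith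
  have h4 : (0:ℝ) ≤ m - 4 := by linarith
  have hm0 : (0:ℝ) ≤ m := by linarith
  have hc0 : (0:ℝ) ≤ 4*(m-4)*(m-4) + 4*m*(m-4) + m*(m-2) := by nlinarith
  have hApow : (m-2)^(k+1) ≤ m^(k+1) :=
    pow_le_pow_left₀ h2 (by linarith) _
  have T1 : m * (2 * (4*(m-2) + m) * (m-2)^(k+1)) * m^(k+2) ≤ 10 * m^(2*k+5) := by
    have step : 2 * (4*(m-2) + m) * (m-2)^(k+1) ≤ (10*m) * m^(k+1) := by
      apply mul_le_mul (by linarith) hApow (pow_nonneg h2 _) (by linarith)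
    calc m * (2 * (4*(m-2) + m) * (m-2)^(k+1)) * m^(k+2)
        ≤ m * ((10*m) * m^(k+1)) * m^(k+2) := by
          apply mul_le_mul_of_nonneg_right _ (pow_nonneg hm0 _)
          exact mul_le_mul_of_nonneg_left step hm0
      _ = 10 * m^(2*k+5) := by ring
  have T2 : m * ((m-2) * ((4*(m-4)*(m-4) + 4*m*(m-4) + m*(m-2)) * (m-4)^k)) * m^(k+2)
      ≤ (m * (3*m-4) * (m-2)^(k+1))^2 := by
    have key1 : (m*(m-4))^k ≤ ((m-2)^2)^k :=
      pow_le_pow_left₀ (mul_nonneg hm0 h4) (by nlinarith) k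
    have key2 : m^3 * (m-2) * (4*(m-4)*(m-4) + 4*m*(m-4) + m*(m-2))
        ≤ m^2 * (3*m-4)^2 * (m-2)^2 := by
      nlinarith [mul_nonneg (mul_nonneg (sq_nonneg m) (sq_nonneg (m-2)))
        (by linarith : (0:ℝ) ≤ m + 2)]
    have hfac0 : (0:ℝ) ≤ m^3 * (m-2) * (4*(m-4)*(m-4) + 4*m*(m-4) + m*(m-2)) := by
      apply mul_nonneg (mul_nonneg (pow_nonneg hm0 3) h2) hc0
    calc m * ((m-2) * ((4*(m-4)*(m-4) + 4*m*(m-4) + m*(m-2)) * (m-4)^k)) * m^(k+2)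
        = (m^3 * (m-2) * (4*(m-4)*(m-4) + 4*m*(m-4) + m*(m-2))) * (m*(m-4))^k := by
          rw [mul_pow]; ring
      _ ≤ (m^3 * (m-2) * (4*(m-4)*(m-4) + 4*m*(m-4) + m*(m-2))) * ((m-2)^2)^k :=
          mul_le_mul_of_nonneg_left key1 hfac0
      _ ≤ (m^2 * (3*m-4)^2 * (m-2)^2) * ((m-2)^2)^k :=
          mul_le_mul_of_nonneg_right key2 (pow_nonneg (sq_nonneg _) _)
      _ = (m * (3*m-4) * (m-2)^(k+1))^2 := by
          rw [← pow_mul, mul_comm 2 k, pow_mul]; ring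
  calc (m * (2 * (4*(m-2) + m) * (m-2)^(k+1)
        + (m-2) * ((4*(m-4)*(m-4) + 4*m*(m-4) + m*(m-2)) * (m-4)^k))) * m^(k+2)
      = m * (2 * (4*(m-2) + m) * (m-2)^(k+1)) * m^(k+2)
        + m * ((m-2) * ((4*(m-4)*(m-4) + 4*m*(m-4) + m*(m-2)) * (m-4)^k)) * m^(k+2) := by
        ring
    _ ≤ 10 * m^(2*k+5) + (m * (3*m-4) * (m-2)^(k+1))^2 := add_le_add T1 T2
    _ = _ := by ring

lemma cheb {γ : Type} (s E : Finset γ) (hEs : E ⊆ s) (T : γ → ℝ) (a t : ℝ)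
    (hta : t ≤ a) (hE : ∀ x ∈ E, T x ≤ t) :
    (E.card : ℝ) * (a - t)^2 ≤ ∑ x ∈ s, (T x - a)^2 := by
  calc (E.card : ℝ) * (a - t)^2 = ∑ _x ∈ E, (a - t)^2 := by
        rw [Finset.sum_const, nsmul_eq_mul]
    _ ≤ ∑ x ∈ E, (T x - a)^2 := by
        refine Finset.sum_le_sum fun x hx => ?_
        have h1 : T x ≤ t := hE x hx
        calc (a - t)^2 ≤ (a - T x)^2 := by
              apply pow_le_pow_left₀ (by linarith) (by linarith)
          _ = (T x - a)^2 := by ring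
    _ ≤ ∑ x ∈ s, (T x - a)^2 :=
        Finset.sum_le_sum_of_subset_of_nonneg hEs (fun x _ _ => sq_nonneg _)

lemma sum_sq_expand {γ : Type} (s : Finset γ) (T : γ → ℝ) (a : ℝ) :
    ∑ x ∈ s, (T x - a)^2
      = (∑ x ∈ s, T x^2) - 2*a*(∑ x ∈ s, T x) + a^2 * s.card := by
  have h : ∀ x ∈ s, (T x - a)^2 = (T x^2 + a^2) - 2*a*T x := fun x _ => by ring
  rw [Finset.sum_congr rfl h, Finset.sum_sub_distrib, Finset.sum_add_distrib,
    ← Finset.mul_sum, Finset.sum_const, nsmul_eq_mul]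
  ring

lemma ratio_pow (m : ℝ) (k : ℕ) (hm : 1000 ≤ m) (hA : m - 2 = 2*(k+1)) :
    Real.exp (-1) ≤ ((m-2)/m)^(k+1) := by
  have hA0 : (0:ℝ) < m - 2 := by linarith
  have hm0 : (0:ℝ) < m := by linarith
  have h1 : m / (m-2) ≤ Real.exp (2/(m-2)) := by
    have he := Real.add_one_le_exp (2/(m-2))
    have heq : 2/(m-2) + 1 = m/(m-2) := by field_simp; ring
    linarith
  have h2 : Real.exp (-(2/(m-2))) ≤ (m-2)/m := by
    rw [Real.exp_neg]
    rw [inv_le_comm₀ (Real.exp_pos _) (by positivity)]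
    calc ((m-2)/m)⁻¹ = m/(m-2) := by rw [inv_div]
      _ ≤ Real.exp (2/(m-2)) := h1
  have h3 : Real.exp (-(2/(m-2)))^(k+1) ≤ ((m-2)/m)^(k+1) :=
    pow_le_pow_left₀ (Real.exp_pos _).le h2 _
  have h4 : Real.exp (-(2/(m-2)))^(k+1) = Real.exp (-1) := by
    rw [← Real.exp_nat_mul]
    congr 1
    rw [hA]
    have hk : ((2:ℝ)*((k:ℝ)+1)) ≠ 0 := by positivity
    push_cast
    field_simp
  rw [← h4]
  exact h3

end Analytic

theorem stmt_19 (r s : ℕ) (hrs : 1 ≤ r + s) (ε : ℝ) (hε : 0 < ε) :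
    ∃ c : ℝ, (0 < c ∧ c ≤ 1) ∧ ∃ M₀ : ℕ, 0 < M₀ ∧
      ∀ (α : Type) [Fintype α] [DecidableEq α],
        Even (Fintype.card α) → M₀ ≤ Fintype.card α →
        ∀ ψ : α → α, (∀ y, ψ (ψ y) = y) → (∀ y, ψ y ≠ y) →
        ∃ E ⊆ Xpsi α (Fintype.card α) ψ,
          (E.card : ℝ) < ε * (Xpsi α (Fintype.card α) ψ).card ∧
          ∀ B : Finset α, c * (Fintype.card α : ℝ) < B.card →
          ∀ x ∈ Xpsi α (Fintype.card α) ψ \ E,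
          ∀ φ : α → α, Function.Bijective φ →
          ∃ u ∈ B, ∃ v ∈ B, φ u = v ∧ occCount x u ≤ r ∧ occCount x v ≤ s := by
  refine ⟨99/100, ⟨by norm_num, by norm_num⟩,
    max 1000 (Nat.ceil ((4000:ℝ)/ε) + 1),
    lt_of_lt_of_le (by norm_num) (le_max_left _ _), ?_⟩
  intro α _ _ heven hM0 ψ hinv hnf
  obtain ⟨n, hn⟩ := heven
  have hMbig : 1000 ≤ Fintype.card α := le_trans (le_max_left _ _) hM0
  have hMeps : (4000:ℝ)/ε < (Fintype.card α : ℝ) := by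
    have h1 : Nat.ceil ((4000:ℝ)/ε) + 1 ≤ Fintype.card α := le_trans (le_max_right _ _) hM0
    calc (4000:ℝ)/ε ≤ (Nat.ceil ((4000:ℝ)/ε) : ℝ) := Nat.le_ceil _
      _ < ((Nat.ceil ((4000:ℝ)/ε) + 1 : ℕ) : ℝ) := by push_cast; linarith
      _ ≤ _ := Nat.cast_le.mpr h1
  have hnn : 1000 ≤ n + n := hn ▸ hMbig
  obtain ⟨k, hk⟩ : ∃ k, n = k + 2 := ⟨n - 2, by omega⟩
  subst hk
  rw [hn]
  rw [hn] at hMeps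
  set m : ℝ := (((k+2)+(k+2) : ℕ) : ℝ) with hmdef
  have hm1000 : (1000:ℝ) ≤ m := by rw [hmdef]; exact_mod_cast hnn
  have hm2n : m = 2*((k:ℝ)+2) := by rw [hmdef]; push_cast; ring
  have hcardeq : (Fintype.card α : ℝ) = m := by rw [hn]
  have hm0 : (0:ℝ) < m := by linarith
  have hA0 : (m - 2) ≠ 0 := by linarith
  have hB0 : (m - 4) ≠ 0 := by linarith
  set X := Xpsi α ((k+2)+(k+2)) ψ with hXdef
  set E := X.filter (fun x => 20*(2 * mCount x 0 + mCount x 1) ≤ 21 * ((k+2)+(k+2)))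
    with hEdef
  have hXcard : (X.card : ℝ) = m^(k+2) := by
    rw [hXdef, card_Xpsi ψ hinv]
    rw [← hcardeq]
    push_cast
    ring
  have hXpos : (0:ℝ) < (X.card : ℝ) := by rw [hXcard]; positivity
  set T : (Fin ((k+2)+(k+2)) → α) → ℝ :=
    fun x => ((2 * mCount x 0 + mCount x 1 : ℕ) : ℝ) with hTdef
  set S1 : ℝ := ∑ x ∈ X, T x with hS1def
  set S2 : ℝ := ∑ x ∈ X, (T x)^2 with hS2def
  have hS1f : S1 = ∑ f : Fin (k+2) → α, ∑ y : α, gw ψ y f := by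
    rw [hS1def, hXdef, sum_Xpsi ψ hinv]
    exact Finset.sum_congr rfl fun f _ => T_ext ψ hinv hnf f
  have hS2f : S2 = ∑ f : Fin (k+2) → α, (∑ y : α, gw ψ y f)^2 := by
    rw [hS2def, hXdef, sum_Xpsi ψ hinv]
    exact Finset.sum_congr rfl fun f _ => by rw [hTdef]; dsimp only; rw [T_ext ψ hinv hnf f]
  have hS1c : S1 = m * (3*m-4) * (m-2)^(k+1) := by
    apply mul_right_cancel₀ hA0
    have h := moment1 ψ hnf (n := k+2)
    rw [hcardeq] at h
    rw [hS1f, h]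
    have : ((k:ℝ)+2)*2 = m := by rw [hm2n]; ring
    calc m * (2 * (m - 2) + 2 * ((k:ℕ)+2:ℕ)) * (m - 2) ^ (k+2)
        = m * (2 * (m - 2) + 2 * ((k:ℝ)+2)) * (m - 2) ^ (k+2) := by push_cast; ring
      _ = m * (3*m-4) * (m-2)^(k+1) * (m-2) := by rw [← this]; ring
  have hS2c : S2 = m * (2 * (4*(m-2) + m) * (m-2)^(k+1)
      + (m-2) * ((4*(m-4)*(m-4) + 4*m*(m-4) + m*(m-2)) * (m-4)^k)) := by
    apply mul_right_cancel₀ (b := (m-2) * ((m-4)*(m-4)))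
      (by simp [hA0, hB0])
    have h := moment2 ψ hinv hnf (by omega : 1 ≤ k+2)
    rw [hcardeq] at h
    rw [hS2f, h]
    have h2 : ((k:ℝ)+2)*2 = m := by rw [hm2n]; ring
    calc m * (2 * ((4 * (m - 2) + 2 * ((k:ℕ)+2:ℕ)) * (m - 2) ^ (k+2)) * ((m - 4) * (m - 4))
          + (m - 2) * ((4 * (m - 4) * (m - 4) + 8 * ((k:ℕ)+2:ℕ) * (m - 4)
              + 4 * ((k:ℕ)+2:ℕ) * ((((k:ℕ)+2:ℕ)) - 1)) * (m - 4) ^ (k+2)) * (m - 2))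
        = m * (2 * ((4 * (m - 2) + 2 * ((k:ℝ)+2)) * (m - 2) ^ (k+2)) * ((m - 4) * (m - 4))
          + (m - 2) * ((4 * (m - 4) * (m - 4) + 8 * ((k:ℝ)+2) * (m - 4)
              + 4 * ((k:ℝ)+2) * (((k:ℝ)+2) - 1)) * (m - 4) ^ (k+2)) * (m - 2)) := by
          push_cast; ring
      _ = _ := by
          rw [show ((k:ℝ)+2) = m/2 by rw [hm2n]; ring]
          field_simp
          ring
  have keyIneq : S2 * m^(k+2) ≤ S1^2 + 10*m^(2*k+5) := by
    rw [hS1c, hS2c]; exact polyineq m k hm1000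
  set a : ℝ := S1 / (X.card : ℝ) with hadef
  have hvar : ∑ x ∈ X, (T x - a)^2 ≤ 10*m^(k+3) := by
    rw [sum_sq_expand X T a, ← hS1def]
    have hexp : S2 - 2*a*S1 + a^2 * (X.card:ℝ) = S2 - S1^2/(X.card:ℝ) := by
      rw [hadef]; field_simp; ring
    rw [← hS2def, hexp]
    have h1 : (S2 - S1^2/(X.card:ℝ)) * (X.card:ℝ) = S2*(X.card:ℝ) - S1^2 := by
      field_simp
    have h2 : S2*(X.card:ℝ) - S1^2 ≤ 10*m^(2*k+5) := by
      rw [hXcard]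
      calc S2 * m^(k+2) - S1^2 ≤ (S1^2 + 10*m^(2*k+5)) - S1^2 := by linarith [keyIneq]
        _ = 10*m^(2*k+5) := by ring
    have h3 : (10*m^(k+3))*(X.card:ℝ) = 10*m^(2*k+5) := by rw [hXcard]; ring
    refine le_of_mul_le_mul_right ?_ hXpos
    rw [h1, h3]
    exact h2
  have habound : (11/10)*m ≤ a := by
    have ha : a = (3*m-4) * ((m-2)/m)^(k+1) := by
      rw [hadef, hS1c, hXcard, div_pow]
      field_simp
      ring
    have hexp : Real.exp (-1) ≤ ((m-2)/m)^(k+1) :=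
      ratio_pow m k hm1000 (by rw [hm2n]; push_cast; ring)
    have hexpval : (1:ℝ)/2.7182818286 ≤ Real.exp (-1) := by
      rw [Real.exp_neg, one_div]
      exact inv_anti₀ (Real.exp_pos 1) (le_of_lt Real.exp_one_lt_d9)
    have h5 : (3*m-4) * Real.exp (-1) ≤ a := by
      rw [ha]
      exact mul_le_mul_of_nonneg_left hexp (by linarith)
    have h6 : (3*m-4) * ((1:ℝ)/2.7182818286) ≤ (3*m-4) * Real.exp (-1) :=
      mul_le_mul_of_nonneg_left hexpval (by linarith)
    have h7 : (11/10)*m ≤ (3*m-4) * ((1:ℝ)/2.7182818286) := by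
      norm_num
      linarith
    linarith
  refine ⟨E, Finset.filter_subset _ _, ?_, ?_⟩
  · -- size bound on E
    have hEt : ∀ x ∈ E, T x ≤ (21/20)*m := by
      intro x hx
      rw [hEdef, Finset.mem_filter] at hx
      have h := hx.2
      rw [hTdef]
      dsimp only
      rw [hmdef]
      have := (Nat.cast_le (α := ℝ)).mpr h
      push_cast at this ⊢
      linarith
    have hta : (21/20)*m ≤ a := by linarith
    have hcheb := cheb X E (Finset.filter_subset _ _) T a ((21/20)*m) hta hEt
    have hmm : (m/20)^2 ≤ (a - (21/20)*m)^2 := by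
      apply pow_le_pow_left₀ (by linarith) (by linarith)
    have h8 : (E.card:ℝ) * (m/20)^2 ≤ 10*m^(k+3) := by
      calc (E.card:ℝ) * (m/20)^2 ≤ (E.card:ℝ) * (a - (21/20)*m)^2 :=
            mul_le_mul_of_nonneg_left hmm (Nat.cast_nonneg _)
        _ ≤ ∑ x ∈ X, (T x - a)^2 := hcheb
        _ ≤ 10*m^(k+3) := hvar
    have h9 : (E.card:ℝ) ≤ 4000 * m^(k+1) := by
      have hsq : (0:ℝ) < (m/20)^2 := by positivity
      refine le_of_mul_le_mul_right ?_ hsq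
      calc (E.card:ℝ) * (m/20)^2 ≤ 10*m^(k+3) := h8
        _ = 4000 * m^(k+1) * (m/20)^2 := by field_simp; ring
    have h10 : 4000 * m^(k+1) < ε * m^(k+2) := by
      have h11 : (4000:ℝ) < ε * m := by
        rw [div_lt_iff₀ hε] at hMeps
        linarith [hMeps]
      calc 4000 * m^(k+1) < (ε*m) * m^(k+1) := by
            apply mul_lt_mul_of_pos_right h11 (by positivity)
        _ = ε * m^(k+2) := by ring
    rw [hXcard]
    linarith
  · -- covering property
    intro B hB x hx φ hφ
    rw [Finset.mem_sdiff] at hx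
    obtain ⟨hxX, hxE⟩ := hx
    rw [hEdef, Finset.mem_filter] at hxE
    push_neg at hxE
    have hxT : 21 * ((k+2)+(k+2)) < 20*(2 * mCount x 0 + mCount x 1) := hxE hxX
    set Lr := univ.filter (fun y => occCount x y ≤ r) with hLr
    set Ls := univ.filter (fun y => occCount x y ≤ s) with hLs
    -- 2*m0 + m1 ≤ |Lr| + |Ls|
    have hone : ∀ t : ℕ, 1 ≤ t →
        mCount x 0 + mCount x 1 ≤ (univ.filter (fun y => occCount x y ≤ t)).card := by
      intro t ht
      have hdisj : Disjoint (univ.filter (fun y => occCount x y = 0))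
          (univ.filter (fun y => occCount x y = 1)) := by
        rw [Finset.disjoint_left]
        intro y hy hy'
        simp only [Finset.mem_filter] at hy hy'
        omega
      have hsub : (univ.filter (fun y => occCount x y = 0))
          ∪ (univ.filter (fun y => occCount x y = 1))
          ⊆ univ.filter (fun y => occCount x y ≤ t) := by
        intro y hy
        simp only [Finset.mem_union, Finset.mem_filter] at hy ⊢
        rcases hy with h | h
        · exact ⟨h.1, by omega⟩
        · exact ⟨h.1, by omega⟩
      calc mCount x 0 + mCount x 1
          = ((univ.filter (fun y => occCount x y = 0))
            ∪ (univ.filter (fun y => occCount x y = 1))).card := by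
            rw [Finset.card_union_of_disjoint hdisj, mCount, mCount]
        _ ≤ _ := Finset.card_le_card hsub
    have hzero : ∀ t : ℕ,
        mCount x 0 ≤ (univ.filter (fun y => occCount x y ≤ t)).card := by
      intro t
      rw [mCount]
      apply Finset.card_le_card
      intro y hy
      simp only [Finset.mem_filter] at hy ⊢
      exact ⟨hy.1, by omega⟩
    have hLrLs : 2 * mCount x 0 + mCount x 1 ≤ Lr.card + Ls.card := by
      rcases (by omega : 1 ≤ r ∨ 1 ≤ s) with h | h
      · have h1 := hone r h
        have h2 := hzero s
        rw [← hLr] at h1; rw [← hLs] at h2; omega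
      · have h1 := hone s h
        have h2 := hzero r
        rw [← hLs] at h1; rw [← hLr] at h2; omega
    -- lower bounds on intersections with B
    have hZcard : ∀ Z : Finset α, B.card + Z.card ≤ ((k+2)+(k+2)) + (B ∩ Z).card := by
      intro Z
      have h1 := Finset.card_union_add_card_inter B Z
      have h2 : (B ∪ Z).card ≤ (k+2)+(k+2) := by
        rw [← hn]
        exact Finset.card_le_univ _
      omega
    -- real arithmetic
    have hMQ : (((k+2)+(k+2) : ℕ):ℝ) = m := rfl
    have hLrLsR : (21/20)*m < (Lr.card : ℝ) + (Ls.card : ℝ) := by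
      have hc1 : (21:ℝ) * m < 20*(2 * mCount x 0 + mCount x 1 : ℕ) := by
        rw [← hMQ]
        exact_mod_cast hxT
      have hc2 : ((2 * mCount x 0 + mCount x 1 : ℕ):ℝ) ≤ (Lr.card:ℝ) + (Ls.card:ℝ) := by
        exact_mod_cast hLrLs
      push_cast at hc1 hc2 ⊢
      linarith
    have hBr : (B.card:ℝ) + (Lr.card:ℝ) ≤ m + ((B ∩ Lr).card : ℝ) := by
      rw [← hMQ]; exact_mod_cast hZcard Lr
    have hBs : (B.card:ℝ) + (Ls.card:ℝ) ≤ m + ((B ∩ Ls).card : ℝ) := by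
      rw [← hMQ]; exact_mod_cast hZcard Ls
    have hsum : m < ((B ∩ Lr).card : ℝ) + ((B ∩ Ls).card : ℝ) := by
      have hBc : (99/100) * m < (B.card : ℝ) := hB
      linarith
    -- find the pair
    have hnotdisj : ¬ Disjoint ((B ∩ Lr).image φ) (B ∩ Ls) := by
      intro hd
      have hc := Finset.card_union_of_disjoint hd
      have himg : ((B ∩ Lr).image φ).card = (B ∩ Lr).card :=
        Finset.card_image_of_injective _ hφ.injective
      have hle : (((B ∩ Lr).image φ) ∪ (B ∩ Ls)).card ≤ (k+2)+(k+2) := by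
        rw [← hn]; exact Finset.card_le_univ _
      rw [hc, himg] at hle
      have : ((B ∩ Lr).card : ℝ) + ((B ∩ Ls).card : ℝ) ≤ m := by
        rw [← hMQ]; exact_mod_cast hle
      linarith
    obtain ⟨v, hv1, hv2⟩ := Finset.not_disjoint_iff.mp hnotdisj
    obtain ⟨u, hu, huv⟩ := Finset.mem_image.mp hv1
    rw [Finset.mem_inter] at hu hv2
    have hur : occCount x u ≤ r := by
      have := hu.2
      rw [hLr, Finset.mem_filter] at this
      exact this.2
    have hvs : occCount x v ≤ s := by
      have := hv2.2
      rw [hLs, Finset.mem_filter] at this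
      exact this.2
    exact ⟨u, hu.1, v, hv2.1, huv, hur, hvs⟩
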